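/- arXiv:0803.0145 — 2 statements merged into one kernel-verified Lean document; each statement's English description precedes it below -/
import Mathlib

section
/- The function Ψ_{λ1,λ2}(p1,p2) defined for integers p1 ≤ p2 by Ψ_{λ1,λ2}(p1,p2) = ∑_{p1 ≤ m ≤ p2} q^{λ1 m} q^{λ2(p1+p2-m)} / ((m-p1)_q! (p2-m)_q!), and Ψ_{λ1,λ2}(p1,p2) = 0 for p1 > p2, satisfies the q-deformed gl_2 Toda chain eigenvalue equation: Ψ(p1+1,p2) + (1-q^{p2-p1+1}) Ψ(p1,p2+1) = (q^{λ1}+q^{λ2}) Ψ(p1,p2) for all integers p1, p2. -/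
open Finset

/-- q-factorial `(n)_q!` (equal to 1 for `n ≤ 0`). -/
noncomputable def qfact (q : ℝ) (n : ℤ) : ℝ := ∏ j ∈ Finset.Icc 1 n.toNat, (1 - q ^ j)

/-- The q-deformed `gl_2` Whittaker function. -/
noncomputable def Psi (q lam1 lam2 : ℝ) (p1 p2 : ℤ) : ℝ :=
  if p1 ≤ p2 then
    ∑ m ∈ Finset.Icc p1 p2,
      q ^ (lam1 * (m : ℝ) + lam2 * ((p1 : ℝ) + (p2 : ℝ) - (m : ℝ))) /
        (qfact q (m - p1) * qfact q (p2 - m))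
  else 0

lemma qfact_pos {q : ℝ} (hq0 : 0 < q) (hq1 : q < 1) (n : ℤ) : 0 < qfact q n := by
  apply Finset.prod_pos
  intro j hj
  have h1 : 1 ≤ j := (Finset.mem_Icc.mp hj).1
  have : q ^ j < 1 := pow_lt_one₀ hq0.le hq1 (by omega)
  linarith

lemma qfact_zero (q : ℝ) : qfact q 0 = 1 := by simp [qfact]

lemma qfact_succ (q : ℝ) {n : ℤ} (hn : 0 ≤ n) :
    qfact q (n + 1) = qfact q n * (1 - q ^ (n + 1).toNat) := by
  unfold qfact
  have h : (n + 1).toNat = n.toNat + 1 := by omega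
  rw [h, Finset.prod_Icc_succ_top (by omega : 1 ≤ n.toNat + 1)]

lemma Psi_eq (q lam1 lam2 : ℝ) (p1 p2 : ℤ) :
    Psi q lam1 lam2 p1 p2 = ∑ m ∈ Finset.Icc p1 p2,
      q ^ (lam1 * (m : ℝ) + lam2 * ((p1 : ℝ) + (p2 : ℝ) - (m : ℝ))) /
        (qfact q (m - p1) * qfact q (p2 - m)) := by
  unfold Psi
  split
  · rfl
  · rw [Finset.Icc_eq_empty (by omega), Finset.sum_empty]

/-- The `gl_2` q-Toda eigenvalue equation for the first Hamiltonian. -/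
theorem Psi_qToda (q lam1 lam2 : ℝ) (hq0 : 0 < q) (hq1 : q < 1) (p1 p2 : ℤ) :
    Psi q lam1 lam2 (p1 + 1) p2 + (1 - q ^ (p2 - p1 + 1)) * Psi q lam1 lam2 p1 (p2 + 1)
      = (q ^ lam1 + q ^ lam2) * Psi q lam1 lam2 p1 p2 := by
  by_cases h : p1 ≤ p2
  · -- main case
    set A : ℤ → ℝ := fun m =>
      q ^ (lam1 * (m : ℝ) + lam2 * ((p1 : ℝ) + (p2 : ℝ) + 1 - (m : ℝ))) with hA
    -- h1
    have h1 : Psi q lam1 lam2 (p1 + 1) p2 = ∑ m ∈ Finset.Icc p1 (p2 + 1),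
        (if p1 + 1 ≤ m ∧ m ≤ p2 then
          A m / (qfact q (m - p1 - 1) * qfact q (p2 - m)) else 0) := by
      rw [Psi_eq,
        ← Finset.sum_subset (Finset.Icc_subset_Icc (by omega) (by omega) :
            Finset.Icc (p1 + 1) p2 ⊆ Finset.Icc p1 (p2 + 1))
          (fun x hx hnx => by
            rw [if_neg]
            simp only [Finset.mem_Icc] at hx hnx
            omega)]
      refine Finset.sum_congr rfl fun m hm => ?_
      have hm' := Finset.mem_Icc.mp hm
      rw [if_pos ⟨hm'.1, hm'.2⟩, hA]
      rw [show m - (p1 + 1) = m - p1 - 1 from by ring]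
      congr 2
      push_cast
      ring
    -- h2
    have h2 : Psi q lam1 lam2 p1 (p2 + 1) = ∑ m ∈ Finset.Icc p1 (p2 + 1),
        A m / (qfact q (m - p1) * qfact q (p2 + 1 - m)) := by
      rw [Psi_eq]
      refine Finset.sum_congr rfl fun m hm => ?_
      rw [hA]
      congr 2
      push_cast
      ring
    -- h3
    have h3 : q ^ lam2 * Psi q lam1 lam2 p1 p2 = ∑ m ∈ Finset.Icc p1 (p2 + 1),
        (if m ≤ p2 then A m / (qfact q (m - p1) * qfact q (p2 - m)) else 0) := by
      rw [Psi_eq, Finset.mul_sum,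
        ← Finset.sum_subset (Finset.Icc_subset_Icc (le_refl p1) (by omega) :
            Finset.Icc p1 p2 ⊆ Finset.Icc p1 (p2 + 1))
          (fun x hx hnx => by
            rw [if_neg]
            simp only [Finset.mem_Icc] at hx hnx
            omega)]
      refine Finset.sum_congr rfl fun m hm => ?_
      have hm' := Finset.mem_Icc.mp hm
      rw [if_pos hm'.2, hA, ← mul_div_assoc, ← Real.rpow_add hq0]
      congr 2
      ring
    -- h4
    have h4 : q ^ lam1 * Psi q lam1 lam2 p1 p2 = ∑ m ∈ Finset.Icc p1 (p2 + 1),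
        (if p1 + 1 ≤ m then
          A m / (qfact q (m - p1 - 1) * qfact q (p2 + 1 - m)) else 0) := by
      rw [Psi_eq, Finset.mul_sum,
        ← Finset.sum_subset (Finset.Icc_subset_Icc (by omega) (le_refl (p2 + 1)) :
            Finset.Icc (p1 + 1) (p2 + 1) ⊆ Finset.Icc p1 (p2 + 1))
          (fun x hx hnx => by
            rw [if_neg]
            simp only [Finset.mem_Icc] at hx hnx
            omega)]
      rw [show Finset.Icc (p1 + 1) (p2 + 1) =
            (Finset.Icc p1 p2).map (addRightEmbedding 1) from
          (Finset.map_add_right_Icc p1 p2 1).symm,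
        Finset.sum_map]
      refine Finset.sum_congr rfl fun m hm => ?_
      have hm' := Finset.mem_Icc.mp hm
      simp only [addRightEmbedding_apply]
      rw [if_pos (by omega), hA]
      rw [show m + 1 - p1 - 1 = m - p1 from by ring,
        show p2 + 1 - (m + 1) = p2 - m from by ring,
        ← mul_div_assoc, ← Real.rpow_add hq0]
      congr 2
      push_cast
      ring
    rw [h1, h2, add_mul, h3, h4, Finset.mul_sum, ← Finset.sum_add_distrib,
      ← Finset.sum_add_distrib]
    refine Finset.sum_congr rfl fun m hm => ?_
    have hm' := Finset.mem_Icc.mp hm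
    have hApos : 0 < A m := Real.rpow_pos_of_pos hq0 _
    split_ifs with c1 c2 c3 c2 c3 c3 c3
    · -- middle: p1+1 ≤ m ≤ p2
      have hx : qfact q (m - p1) = qfact q (m - p1 - 1) * (1 - q ^ (m - p1).toNat) := by
        have hh := qfact_succ q (n := m - p1 - 1) (by omega)
        rw [show m - p1 - 1 + 1 = m - p1 from by ring] at hh
        exact hh
      have hy : qfact q (p2 + 1 - m) = qfact q (p2 - m) * (1 - q ^ (p2 + 1 - m).toNat) := by
        have hh := qfact_succ q (n := p2 - m) (by omega)
        rw [show p2 - m + 1 = p2 + 1 - m from by ring] at hh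
        exact hh
      have hzp : (q : ℝ) ^ (p2 - p1 + 1) = q ^ (m - p1).toNat * q ^ (p2 + 1 - m).toNat := by
        rw [show (p2 - p1 + 1 : ℤ) = (((m - p1).toNat + (p2 + 1 - m).toNat : ℕ) : ℤ) from by
          omega, zpow_natCast, pow_add]
      have hFa := (qfact_pos hq0 hq1 (m - p1 - 1)).ne'
      have hFb := (qfact_pos hq0 hq1 (p2 - m)).ne'
      have hux : (0 : ℝ) < 1 - q ^ (m - p1).toNat := by
        have := pow_lt_one₀ hq0.le hq1 (show (m - p1).toNat ≠ 0 by omega)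
        linarith
      have huy : (0 : ℝ) < 1 - q ^ (p2 + 1 - m).toNat := by
        have := pow_lt_one₀ hq0.le hq1 (show (p2 + 1 - m).toNat ≠ 0 by omega)
        linarith
      rw [hx, hy, hzp]
      field_simp
      ring
    · omega
    · omega
    · omega
    · omega
    · -- m = p2 + 1
      have hmeq : m = p2 + 1 := by omega
      rw [hmeq]
      rw [show p2 + 1 - (p2 + 1) = (0 : ℤ) from by ring, qfact_zero]
      have hy : qfact q (p2 + 1 - p1) = qfact q (p2 + 1 - p1 - 1) *
          (1 - q ^ (p2 + 1 - p1).toNat) := by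
        have hh := qfact_succ q (n := p2 + 1 - p1 - 1) (by omega)
        rw [show p2 + 1 - p1 - 1 + 1 = p2 + 1 - p1 from by ring] at hh
        exact hh
      have hzp : (q : ℝ) ^ (p2 - p1 + 1) = q ^ (p2 + 1 - p1).toNat := by
        rw [show (p2 - p1 + 1 : ℤ) = (((p2 + 1 - p1).toNat : ℕ) : ℤ) from by
          omega, zpow_natCast]
      have hFa := (qfact_pos hq0 hq1 (p2 + 1 - p1 - 1)).ne'
      have hux : (0 : ℝ) < 1 - q ^ (p2 + 1 - p1).toNat := by
        have := pow_lt_one₀ hq0.le hq1 (show (p2 + 1 - p1).toNat ≠ 0 by omega)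
        linarith
      rw [hy, hzp]
      field_simp
      ring
    · -- m = p1
      have hmeq : m = p1 := by omega
      rw [hmeq]
      rw [show p1 - p1 = (0 : ℤ) from by ring, qfact_zero]
      have hy : qfact q (p2 + 1 - p1) = qfact q (p2 - p1) *
          (1 - q ^ (p2 + 1 - p1).toNat) := by
        have hh := qfact_succ q (n := p2 - p1) (by omega)
        rw [show p2 - p1 + 1 = p2 + 1 - p1 from by ring] at hh
        exact hh
      have hzp : (q : ℝ) ^ (p2 - p1 + 1) = q ^ (p2 + 1 - p1).toNat := by
        rw [show (p2 - p1 + 1 : ℤ) = (((p2 + 1 - p1).toNat : ℕ) : ℤ) from by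
          omega, zpow_natCast]
      have hFb := (qfact_pos hq0 hq1 (p2 - p1)).ne'
      have hux : (0 : ℝ) < 1 - q ^ (p2 + 1 - p1).toNat := by
        have := pow_lt_one₀ hq0.le hq1 (show (p2 + 1 - p1).toNat ≠ 0 by omega)
        linarith
      rw [hy, hzp]
      field_simp
    · omega
  · by_cases h2 : p1 ≤ p2 + 1
    · have hp : p1 = p2 + 1 := by omega
      subst hp
      rw [show p2 - (p2 + 1) + 1 = (0 : ℤ) from by ring, zpow_zero, sub_self, zero_mul,
        add_zero]
      unfold Psi
      rw [if_neg (by omega), if_neg (by omega), mul_zero]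
    · unfold Psi
      rw [if_neg (by omega), if_neg (by omega), if_neg (by omega)]
      ring
end

section
/- With ψ̃ as above, the recursive relation ψ̃^{(ℓ+1)}_{λ}(p_{ℓ+1}) = ∑ z_{ℓ+1}^{∑_{i=1}^{ℓ+1} p_{ℓ+1,i} − ∑_{i=1}^{ℓ} p_{ℓ,i}} ∏_{i=1}^{ℓ} C(p_{ℓ+1,i+1} − p_{ℓ+1,i}, p_{ℓ,i} − p_{ℓ+1,i}) · ψ̃^{(ℓ)}_{λ'}(p_ℓ) holds, where the sum is over integer tuples p_{ℓ,i} with p_{ℓ+1,i} ≤ p_{ℓ,i} ≤ p_{ℓ+1,i+1}, C(n,k) is the ordinary binomial coefficient, λ' = (λ_1,…,λ_ℓ), and ψ̃^{(ℓ)} is defined by the same product-of-elementary-symmetric-polynomials formula in variables z_1,…,z_ℓ. -/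
open Finset

/-- The `r`-th elementary symmetric polynomial in `n` variables. -/
noncomputable def esymm (n r : ℕ) (z : Fin n → ℝ) : ℝ :=
  ∑ s ∈ Finset.powersetCard r (Finset.univ : Finset (Fin n)), ∏ i ∈ s, z i

/-- `ψ̃(p) = e_m(z)^{p_1} ∏_{i=1}^{m-1} e_{m-i}(z)^{p_{i+1}-p_i}`. -/
noncomputable def psiT : (m : ℕ) → (Fin m → ℝ) → (Fin m → ℤ) → ℝ
  | 0, _, _ => 1
  | m + 1, z, p =>
      esymm (m + 1) (m + 1) z ^ p 0 *
        ∏ i : Fin m, esymm (m + 1) (m - i.1) z ^ (p (Fin.succ i) - p (Fin.castSucc i))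

theorem esymm_zero (n : ℕ) (z : Fin n → ℝ) : esymm n 0 z = 1 := by
  simp [esymm]

theorem esymm_of_gt (n r : ℕ) (h : n < r) (z : Fin n → ℝ) : esymm n r z = 0 := by
  rw [esymm, Finset.powersetCard_eq_empty.mpr (by simpa using h), Finset.sum_empty]

theorem esymm_succ (n r : ℕ) (hr : 1 ≤ r) (z : Fin (n + 1) → ℝ) :
    esymm (n + 1) r z =
      esymm n r (fun i => z (Fin.castSucc i)) +
        z (Fin.last n) * esymm n (r - 1) (fun i => z (Fin.castSucc i)) := by
  obtain ⟨r, rfl⟩ := Nat.exists_eq_add_of_le hr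
  rw [Nat.add_comm 1 r]
  unfold esymm
  rw [Fin.univ_castSuccEmb, Finset.cons_eq_insert,
    powersetCard_succ_insert (by simp [Fin.ext_iff, Fin.castSuccEmb, fun x : Fin n => x.2.ne]),
    Finset.sum_union]
  · congr 1
    · rw [Finset.powersetCard_map, Finset.sum_map]
      refine Finset.sum_congr rfl fun s _ => ?_
      show ∏ i ∈ s.map Fin.castSuccEmb, z i = _
      rw [Finset.prod_map]
      rfl
    · rw [Finset.sum_image, Finset.powersetCard_map, Finset.sum_map, Finset.mul_sum]
      · refine Finset.sum_congr rfl fun s _ => ?_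
        show ∏ i ∈ insert (Fin.last n) (s.map Fin.castSuccEmb), z i = _
        have hlast : Fin.last n ∉ Finset.map Fin.castSuccEmb s := by
          simp [Fin.ext_iff, Fin.castSuccEmb, fun x : Fin n => x.2.ne]
        rw [Finset.prod_insert hlast, Finset.prod_map]
        rfl
      · intro a ha b hb hab
        have hla : Fin.last n ∉ a := fun h => by
          have := (Finset.mem_powersetCard.mp ha).1 h
          rw [Finset.mem_map] at this
          obtain ⟨x, _, hx⟩ := this
          exact absurd hx (by simp [Fin.ext_iff, Fin.castSuccEmb, x.2.ne])
        have hlb : Fin.last n ∉ b := fun h => by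
          have := (Finset.mem_powersetCard.mp hb).1 h
          rw [Finset.mem_map] at this
          obtain ⟨x, _, hx⟩ := this
          exact absurd hx (by simp [Fin.ext_iff, Fin.castSuccEmb, x.2.ne])
        have := congrArg (Finset.erase · (Fin.last n)) hab
        simpa [Finset.erase_insert_of_ne, Finset.erase_insert hla, Finset.erase_insert hlb]
          using this
  · rw [Finset.disjoint_left]
    intro a ha hb
    obtain ⟨t, _, rfl⟩ := Finset.mem_image.mp hb
    have := (Finset.mem_powersetCard.mp ha).1 (Finset.mem_insert_self (Fin.last n) t)
    rw [Finset.mem_map] at this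
    obtain ⟨x, _, hx⟩ := this
    exact absurd hx (by simp [Fin.ext_iff, Fin.castSuccEmb, x.2.ne])


theorem esymm_zero' (n : ℕ) (z : Fin n → ℝ) : esymm n 0 z = 1 := by
  simp [esymm]

theorem esymm_pos (n r : ℕ) (h : r ≤ n) (z : Fin n → ℝ) (hz : ∀ i, 0 < z i) :
    0 < esymm n r z := by
  refine Finset.sum_pos (fun s _ => Finset.prod_pos fun i _ => hz i) ?_
  rw [Finset.nonempty_iff_ne_empty]
  intro hc
  rw [Finset.powersetCard_eq_empty] at hc
  simp at hc; omega

theorem E_collect (ℓ : ℕ) (z' : Fin ℓ → ℝ) (hz' : ∀ i, 0 < z' i)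
    (p : Fin (ℓ + 1) → ℤ) (mid : Fin ℓ → ℤ)
    (h1 : ∀ i : Fin ℓ, p (Fin.castSucc i) ≤ mid i) (h2 : ∀ i, mid i ≤ p (Fin.succ i)) :
    esymm ℓ ℓ z' ^ p 0 *
      ((∏ i : Fin ℓ, esymm ℓ (ℓ - i.1) z' ^ (mid i - p (Fin.castSucc i)).toNat) *
        (∏ i : Fin ℓ, esymm ℓ (ℓ - i.1 - 1) z' ^ (p (Fin.succ i) - mid i).toNat)) =
      psiT ℓ z' mid := by
  match ℓ, z', hz', p, mid, h1, h2 with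
  | 0, z', hz', p, mid, h1, h2 =>
    simp [psiT, esymm_zero']
  | m + 1, z', hz', p, mid, h1, h2 =>
    have hpos : (0:ℝ) < esymm (m+1) (m+1) z' := esymm_pos _ _ le_rfl z' hz'
    rw [psiT]
    rw [Fin.prod_univ_succ (fun i : Fin (m+1) =>
        esymm (m+1) ((m+1) - i.1) z' ^ (mid i - p (Fin.castSucc i)).toNat),
      Fin.prod_univ_castSucc (fun i : Fin (m+1) =>
        esymm (m+1) ((m+1) - i.1 - 1) z' ^ (p (Fin.succ i) - mid i).toNat)]
    have hlastfactor : esymm (m+1) ((m+1) - (Fin.last m).1 - 1) z'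
        ^ (p (Fin.succ (Fin.last m)) - mid (Fin.last m)).toNat = 1 := by
      simp [Fin.val_last, esymm_zero']
    rw [hlastfactor, mul_one]
    -- rearrange
    have key0 : esymm (m+1) (m+1) z' ^ p 0 *
        esymm (m+1) ((m+1) - (0 : Fin (m+1)).1) z' ^ (mid 0 - p (Fin.castSucc 0)).toNat
        = esymm (m+1) (m+1) z' ^ mid 0 := by
      rw [show ((0 : Fin (m+1)).1) = 0 from rfl, Nat.sub_zero, ← zpow_natCast _ 
        (mid 0 - p (Fin.castSucc 0)).toNat, ← zpow_add₀ hpos.ne']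
      congr 1
      have := h1 0
      rw [Fin.castSucc_zero] at this ⊢
      omega
    have keyi : ∀ j : Fin m,
        esymm (m+1) ((m+1) - (Fin.succ j).1) z' ^ (mid (Fin.succ j) - p (Fin.castSucc (Fin.succ j))).toNat *
          esymm (m+1) ((m+1) - (Fin.castSucc j).1 - 1) z' ^ (p (Fin.succ (Fin.castSucc j)) - mid (Fin.castSucc j)).toNat
        = esymm (m+1) (m - j.1) z' ^ (mid (Fin.succ j) - mid (Fin.castSucc j)) := by
      intro j
      have e1 : (m+1) - (Fin.succ j).1 = m - j.1 := by simp [Fin.val_succ]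
      have e2 : (m+1) - (Fin.castSucc j).1 - 1 = m - j.1 := by simp [Fin.coe_castSucc]; omega
      have e3 : Fin.castSucc (Fin.succ j) = Fin.succ (Fin.castSucc j) := by
        rw [Fin.succ_castSucc]
      rw [e1, e2, e3, ← pow_add]
      have hle1 := h1 (Fin.succ j)
      have hle2 := h2 (Fin.castSucc j)
      rw [e3] at hle1
      have hmono : mid (Fin.castSucc j) ≤ mid (Fin.succ j) := le_trans hle2 hle1
      rw [← zpow_natCast]
      congr 1
      omega
    calc esymm (m+1) (m+1) z' ^ p 0 *
          (esymm (m+1) ((m+1) - (0:Fin (m+1)).1) z' ^ (mid 0 - p (Fin.castSucc 0)).toNat *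
            (∏ j : Fin m, esymm (m+1) ((m+1) - (Fin.succ j).1) z' ^ (mid (Fin.succ j) - p (Fin.castSucc (Fin.succ j))).toNat) *
          ∏ j : Fin m, esymm (m+1) ((m+1) - (Fin.castSucc j).1 - 1) z' ^ (p (Fin.succ (Fin.castSucc j)) - mid (Fin.castSucc j)).toNat)
        = (esymm (m+1) (m+1) z' ^ p 0 *
            esymm (m+1) ((m+1) - (0:Fin (m+1)).1) z' ^ (mid 0 - p (Fin.castSucc 0)).toNat) *
          ∏ j : Fin m, (esymm (m+1) ((m+1) - (Fin.succ j).1) z' ^ (mid (Fin.succ j) - p (Fin.castSucc (Fin.succ j))).toNat *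
            esymm (m+1) ((m+1) - (Fin.castSucc j).1 - 1) z' ^ (p (Fin.succ (Fin.castSucc j)) - mid (Fin.castSucc j)).toNat) := by
          rw [Finset.prod_mul_distrib]; ring
      _ = esymm (m+1) (m+1) z' ^ mid 0 *
          ∏ j : Fin m, esymm (m+1) (m - j.1) z' ^ (mid (Fin.succ j) - mid (Fin.castSucc j)) := by
          rw [key0]; congr 1; exact Finset.prod_congr rfl fun j _ => keyi j

theorem term_eq (ℓ : ℕ) (z' : Fin ℓ → ℝ) (hz' : ∀ i, 0 < z' i) (zL : ℝ) (hzL : 0 < zL)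
    (p : Fin (ℓ + 1) → ℤ) (hd : ∀ i : Fin ℓ, p (Fin.castSucc i) ≤ p (Fin.succ i))
    (k : Fin ℓ → ℕ) (hk : ∀ i, (k i : ℤ) ≤ p (Fin.succ i) - p (Fin.castSucc i)) :
    zL ^ p 0 * esymm ℓ ℓ z' ^ p 0 *
      ∏ i : Fin ℓ, (esymm ℓ (ℓ - i.1) z' ^ k i *
        (zL * esymm ℓ (ℓ - i.1 - 1) z') ^ ((p (Fin.succ i) - p (Fin.castSucc i)).toNat - k i) *
        ((p (Fin.succ i) - p (Fin.castSucc i)).toNat.choose (k i) : ℝ))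
    = zL ^ ((∑ i, p i) - ∑ i, (p (Fin.castSucc i) + (k i : ℤ))) *
      (∏ i : Fin ℓ, ((p (Fin.succ i) - p (Fin.castSucc i)).toNat.choose
         ((p (Fin.castSucc i) + (k i : ℤ) - p (Fin.castSucc i)).toNat) : ℝ)) *
      psiT ℓ z' (fun i => p (Fin.castSucc i) + (k i : ℤ)) := by
  have h1 : ∀ i : Fin ℓ, p (Fin.castSucc i) ≤ p (Fin.castSucc i) + (k i : ℤ) := fun i => by
    have : (0:ℤ) ≤ (k i : ℤ) := Int.natCast_nonneg _
    omega
  have h2 : ∀ i : Fin ℓ, p (Fin.castSucc i) + (k i : ℤ) ≤ p (Fin.succ i) := fun i => by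
    have := hk i; omega
  have hch : ∀ i : Fin ℓ, (p (Fin.castSucc i) + (k i : ℤ) - p (Fin.castSucc i)).toNat = k i :=
    fun i => by omega
  have hzexp : zL ^ p 0 *
      zL ^ (∑ i : Fin ℓ, ((p (Fin.succ i) - p (Fin.castSucc i)).toNat - k i))
      = zL ^ ((∑ i, p i) - ∑ i : Fin ℓ, (p (Fin.castSucc i) + (k i : ℤ))) := by
    rw [← zpow_natCast zL (∑ i : Fin ℓ, ((p (Fin.succ i) - p (Fin.castSucc i)).toNat - k i)),
      ← zpow_add₀ hzL.ne']
    congr 1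
    rw [Nat.cast_sum,
      Finset.sum_congr rfl (fun i _ =>
        show (((p (Fin.succ i) - p (Fin.castSucc i)).toNat - k i : ℕ) : ℤ)
            = p (Fin.succ i) - (p (Fin.castSucc i) + (k i : ℤ)) from by
          have := hk i; have := hd i; omega),
      Finset.sum_sub_distrib, Fin.sum_univ_succ p]
    ring
  calc zL ^ p 0 * esymm ℓ ℓ z' ^ p 0 *
      ∏ i : Fin ℓ, (esymm ℓ (ℓ - i.1) z' ^ k i *
        (zL * esymm ℓ (ℓ - i.1 - 1) z') ^ ((p (Fin.succ i) - p (Fin.castSucc i)).toNat - k i) *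
        ((p (Fin.succ i) - p (Fin.castSucc i)).toNat.choose (k i) : ℝ))
      = (zL ^ p 0 * ∏ i : Fin ℓ, zL ^ ((p (Fin.succ i) - p (Fin.castSucc i)).toNat - k i)) *
        (∏ i : Fin ℓ, ((p (Fin.succ i) - p (Fin.castSucc i)).toNat.choose (k i) : ℝ)) *
        (esymm ℓ ℓ z' ^ p 0 *
          ((∏ i : Fin ℓ, esymm ℓ (ℓ - i.1) z' ^ k i) *
            (∏ i : Fin ℓ, esymm ℓ (ℓ - i.1 - 1) z'
              ^ ((p (Fin.succ i) - p (Fin.castSucc i)).toNat - k i)))) := by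
        simp_rw [mul_pow]
        rw [Finset.prod_mul_distrib, Finset.prod_mul_distrib, Finset.prod_mul_distrib]
        ring
    _ = zL ^ ((∑ i, p i) - ∑ i : Fin ℓ, (p (Fin.castSucc i) + (k i : ℤ))) *
        (∏ i : Fin ℓ, ((p (Fin.succ i) - p (Fin.castSucc i)).toNat.choose
           ((p (Fin.castSucc i) + (k i : ℤ) - p (Fin.castSucc i)).toNat) : ℝ)) *
        psiT ℓ z' (fun i => p (Fin.castSucc i) + (k i : ℤ)) := by
        rw [Finset.prod_pow_eq_pow_sum, hzexp]
        congr 1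
        · congr 1
          exact Finset.prod_congr rfl fun i _ => by rw [hch i]
        · rw [← E_collect ℓ z' hz' p (fun i => p (Fin.castSucc i) + (k i : ℤ)) h1 h2]
          congr 2
          · exact Finset.prod_congr rfl fun i _ => by
              congr 1
              have := hch i
              simpa using this.symm
          · exact Finset.prod_congr rfl fun i _ => by
              congr 1
              have := hk i; have := hd i
              omega


/-- Recursive relation for `ψ̃` with ordinary binomial coefficients. -/
theorem psiT_recursion (ℓ : ℕ) (z : Fin (ℓ + 1) → ℝ) (hz : ∀ i, 0 < z i)
    (p : Fin (ℓ + 1) → ℤ) (hp : Monotone p) :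
    psiT (ℓ + 1) z p =
      ∑ mid ∈ Fintype.piFinset
          (fun i : Fin ℓ => Finset.Icc (p (Fin.castSucc i)) (p (Fin.succ i))),
        z (Fin.last ℓ) ^ ((∑ i, p i) - ∑ i, mid i) *
          (∏ i : Fin ℓ,
            ((p (Fin.succ i) - p (Fin.castSucc i)).toNat.choose
              ((mid i - p (Fin.castSucc i)).toNat) : ℝ)) *
          psiT ℓ (fun i => z (Fin.castSucc i)) mid := by
  set z' : Fin ℓ → ℝ := fun i => z (Fin.castSucc i) with hz'def
  have hz' : ∀ i, 0 < z' i := fun i => hz _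
  set zL : ℝ := z (Fin.last ℓ) with hzLdef
  have hzL : 0 < zL := hz _
  have hd : ∀ i : Fin ℓ, p (Fin.castSucc i) ≤ p (Fin.succ i) :=
    fun i => hp (Fin.castSucc_le_succ i)
  have htop : esymm (ℓ + 1) (ℓ + 1) z = zL * esymm ℓ ℓ z' := by
    rw [esymm_succ ℓ (ℓ + 1) (by omega) z, esymm_of_gt ℓ (ℓ + 1) (by omega)]
    simp [hz'def, hzLdef]
  have hfac : ∀ i : Fin ℓ, esymm (ℓ + 1) (ℓ - i.1) z ^ (p (Fin.succ i) - p (Fin.castSucc i))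
      = ∑ k ∈ Finset.range ((p (Fin.succ i) - p (Fin.castSucc i)).toNat + 1),
          esymm ℓ (ℓ - i.1) z' ^ k *
            (zL * esymm ℓ (ℓ - i.1 - 1) z')
              ^ ((p (Fin.succ i) - p (Fin.castSucc i)).toNat - k) *
            ((p (Fin.succ i) - p (Fin.castSucc i)).toNat.choose k : ℝ) := by
    intro i
    have hnn : (0:ℤ) ≤ p (Fin.succ i) - p (Fin.castSucc i) := by have := hd i; omega
    conv_lhs => rw [← Int.toNat_of_nonneg hnn]
    rw [zpow_natCast, esymm_succ ℓ (ℓ - i.1) (by omega) z, add_pow]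
  rw [psiT, htop, mul_zpow, Finset.prod_congr rfl (fun i _ => hfac i),
    Finset.prod_univ_sum, Finset.mul_sum]
  refine Finset.sum_nbij' (fun k => fun i => p (Fin.castSucc i) + (k i : ℤ))
    (fun mid => fun i => (mid i - p (Fin.castSucc i)).toNat) ?_ ?_ ?_ ?_ ?_
  case refine_1 =>
    intro k hk
    simp only [Fintype.mem_piFinset, Finset.mem_range] at hk
    simp only [Fintype.mem_piFinset, Finset.mem_Icc]
    intro i
    have h1 := hk i
    have h2 := hd i
    omega
  case refine_2 =>
    intro mid hmid
    simp only [Fintype.mem_piFinset, Finset.mem_Icc] at hmid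
    simp only [Fintype.mem_piFinset, Finset.mem_range]
    intro i
    have h1 := hmid i
    omega
  case refine_3 =>
    intro k hk
    simp only [Fintype.mem_piFinset, Finset.mem_range] at hk
    funext i
    beta_reduce
    have h1 := hk i
    omega
  case refine_4 =>
    intro mid hmid
    simp only [Fintype.mem_piFinset, Finset.mem_Icc] at hmid
    funext i
    beta_reduce
    have h1 := hmid i
    omega
  case refine_5 =>
    intro k hk
    simp only [Fintype.mem_piFinset, Finset.mem_range] at hk
    have hkle : ∀ i, (k i : ℤ) ≤ p (Fin.succ i) - p (Fin.castSucc i) := by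
      intro i
      have h1 := hk i
      have h2 := hd i
      omega
    exact term_eq ℓ z' hz' zL hzL p hd k hkle
end
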